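/- Let $V$ be a finite-dimensional complex normed vector space and let $G$ be a finite group of linear isometries of $V$. Set $M = \{x \in G : \|\mathrm{id}_V - x\|_{\mathrm{op}} < 1/2\}$. Then the subgroup $A$ of $G$ generated by $M$ is an abelian normal subgroup of $G$. -/

import Mathlib

open Polynomial Module

set_option maxHeartbeats 2000000

section Aux

variable {V : Type*} [NormedAddCommGroup V] [NormedSpace ℂ V] [FiniteDimensional ℂ V]

private lemma real_pow_eq_one {x : ℝ} {m : ℕ} (hm : 0 < m) (hx : 0 ≤ x) (h : x ^ m = 1) :
    x = 1 := by
  rcases lt_trichotomy x 1 with h1 | h1 | h1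
  · have := pow_lt_one₀ hx h1 hm.ne'
    rw [h] at this; exact absurd this (lt_irrefl 1)
  · exact h1
  · have := one_lt_pow₀ h1 hm.ne'
    rw [h] at this; exact absurd this (lt_irrefl 1)

private lemma exists_pow_re_neg {μ : ℂ} {m : ℕ} (hm : 0 < m) (hμ : μ ^ m = 1) (hne : μ ≠ 1) :
    ∃ k : ℕ, (μ ^ k).re < 0 := by
  by_contra h
  push_neg at h
  have hsum : ∑ i ∈ Finset.range m, μ ^ i = 0 := by
    have := geom_sum_eq hne m
    rw [hμ] at this
    simp [this]
  have h2 : (0 : ℝ) < ∑ i ∈ Finset.range m, (μ ^ i).re := by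
    have h0 : ((μ : ℂ) ^ 0).re = 1 := by simp
    calc (0 : ℝ) < 1 := one_pos
      _ = (μ ^ 0).re := h0.symm
      _ ≤ ∑ i ∈ Finset.range m, (μ ^ i).re :=
        Finset.single_le_sum (fun i _ => h i) (Finset.mem_range.2 hm)
  rw [← Complex.re_sum, hsum] at h2
  simp at h2

/-- eigenvalues are preserved by conjugation by a unit -/
private lemma hasEigenvalue_conj {f : V →L[ℂ] V} (u : (V →L[ℂ] V)ˣ) {μ : ℂ}
    (h : Module.End.HasEigenvalue
      (((↑u * f * ↑u⁻¹ : V →L[ℂ] V) : V →ₗ[ℂ] V)) μ) :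
    Module.End.HasEigenvalue ((f : V →ₗ[ℂ] V)) μ := by
  obtain ⟨v, hv⟩ := h.exists_hasEigenvector
  have hv1 : (↑u * f * ↑u⁻¹ : V →L[ℂ] V) v = μ • v := hv.apply_eq_smul
  have hv0 : v ≠ 0 := hv.2
  refine Module.End.hasEigenvalue_of_hasEigenvector (x := (↑u⁻¹ : V →L[ℂ] V) v) ⟨?_, ?_⟩
  · rw [Module.End.mem_eigenspace_iff]
    have h2 : (↑u⁻¹ : V →L[ℂ] V) ((↑u * f * ↑u⁻¹ : V →L[ℂ] V) v)
        = (↑u⁻¹ : V →L[ℂ] V) (μ • v) := by rw [hv1]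
    have h3 : (↑u⁻¹ : V →L[ℂ] V) ((↑u * f * ↑u⁻¹ : V →L[ℂ] V) v)
        = f ((↑u⁻¹ : V →L[ℂ] V) v) := by
      simp only [ContinuousLinearMap.mul_apply]
      have : (↑u⁻¹ * ↑u : V →L[ℂ] V) = 1 := u.inv_mul
      calc (↑u⁻¹ : V →L[ℂ] V) ((↑u : V →L[ℂ] V) (f ((↑u⁻¹ : V →L[ℂ] V) v)))
          = ((↑u⁻¹ * ↑u : V →L[ℂ] V)) (f ((↑u⁻¹ : V →L[ℂ] V) v)) := by
            rw [ContinuousLinearMap.mul_apply]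
        _ = f ((↑u⁻¹ : V →L[ℂ] V) v) := by rw [this]; rfl
    rw [h3] at h2
    simpa using h2
  · intro h0
    apply hv0
    have : (↑u : V →L[ℂ] V) ((↑u⁻¹ : V →L[ℂ] V) v) = (↑u : V →L[ℂ] V) 0 := by rw [h0]
    have h4 : (↑u * ↑u⁻¹ : V →L[ℂ] V) = 1 := u.mul_inv
    calc v = (↑u * ↑u⁻¹ : V →L[ℂ] V) v := by rw [h4]; rfl
      _ = (↑u : V →L[ℂ] V) ((↑u⁻¹ : V →L[ℂ] V) v) := rfl
      _ = (↑u : V →L[ℂ] V) 0 := this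
      _ = 0 := by simp

/-- eigenvalues of `f` are within `‖1 - f‖` of `1`. -/
private lemma eig_dist_le {f : V →L[ℂ] V} {μ : ℂ}
    (h : Module.End.HasEigenvalue ((f : V →ₗ[ℂ] V)) μ) :
    ‖μ - 1‖ ≤ ‖(1 : V →L[ℂ] V) - f‖ := by
  obtain ⟨v, hv⟩ := h.exists_hasEigenvector
  have hv1 : f v = μ • v := hv.apply_eq_smul
  have hv0 : v ≠ 0 := hv.2
  have h1 : ((1 : V →L[ℂ] V) - f) v = (1 - μ) • v := by
    simp [ContinuousLinearMap.sub_apply, hv1, sub_smul]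
  have h2 : ‖((1 : V →L[ℂ] V) - f) v‖ ≤ ‖(1 : V →L[ℂ] V) - f‖ * ‖v‖ :=
    ContinuousLinearMap.le_opNorm _ _
  rw [h1, norm_smul] at h2
  have hvpos : 0 < ‖v‖ := norm_pos_iff.2 hv0
  have : ‖(1 : ℂ) - μ‖ ≤ ‖(1 : V →L[ℂ] V) - f‖ := le_of_mul_le_mul_right h2 hvpos
  rwa [norm_sub_rev] at this

/-- Key analytic lemma: if `u` commutes with `w`, both have finite order, and all
eigenvalues of all `u ^ k * w` are within `1/2` of `1`, then `u = 1`. -/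
private lemma key_lemma (u w : (V →L[ℂ] V)ˣ) {n m : ℕ} (hn : 0 < n) (hm : 0 < m)
    (hwn : w ^ n = 1) (hum : u ^ m = 1) (hcomm : u * w = w * u)
    (hspec : ∀ (k : ℕ) (μ : ℂ), Module.End.HasEigenvalue
      (((↑(u ^ k * w) : V →L[ℂ] V) : V →ₗ[ℂ] V)) μ → ‖μ - 1‖ < 1 / 2) :
    u = 1 := by
  rcases subsingleton_or_nontrivial V with hV | hV
  · have : Subsingleton (V →L[ℂ] V) := ⟨fun a b => by ext v; exact Subsingleton.elim _ _⟩
    exact Units.ext (Subsingleton.elim _ _)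
  by_contra hu
  set U : Module.End ℂ V := ((↑u : V →L[ℂ] V) : V →ₗ[ℂ] V) with hU
  set W : Module.End ℂ V := ((↑w : V →L[ℂ] V) : V →ₗ[ℂ] V) with hW
  have hUm : U ^ m = 1 := by
    have h1 : ((u : V →L[ℂ] V) ^ m) = ((1 : (V →L[ℂ] V)ˣ) : V →L[ℂ] V) := by
      rw [← Units.val_pow_eq_pow_val, hum]
    have h2 := congrArg (ContinuousLinearMap.toLinearMapRingHom (R₁ := ℂ) (M₁ := V)) h1
    rw [map_pow] at h2
    exact h2
  have hUne : U ≠ 1 := by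
    intro hU1
    apply hu
    apply Units.ext
    apply ContinuousLinearMap.coe_injective
    exact hU1
  -- step 1 : U has an eigenvalue μ ≠ 1
  obtain ⟨μ, hμne, hμ⟩ : ∃ μ : ℂ, μ ≠ 1 ∧ Module.End.HasEigenvalue U μ := by
    by_contra hcon
    push_neg at hcon
    apply hUne
    set p := minpoly ℂ U with hp
    have hint : IsIntegral ℂ U := LinearMap.isIntegral U
    have hmonic : p.Monic := minpoly.monic hint
    have hdvd : p ∣ X ^ m - 1 := by
      apply minpoly.dvd
      rw [map_sub, map_pow, aeval_X, map_one, hUm, sub_self]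
    have hsep : p.Separable := by
      refine Polynomial.Separable.of_dvd ?_ hdvd
      rw [Polynomial.X_pow_sub_one_separable_iff]
      exact_mod_cast Nat.cast_ne_zero.2 hm.ne'
    have hdeg : 0 < p.natDegree := minpoly.natDegree_pos hint
    have hsplits : p.Splits := IsAlgClosed.splits p
    have hroots_card : p.roots.card = p.natDegree :=
      Polynomial.splits_iff_card_roots.mp hsplits
    have hroots1 : ∀ r ∈ p.roots, r = (1 : ℂ) := by
      intro r hr
      by_contra hne
      exact hcon r hne
        (Module.End.hasEigenvalue_of_isRoot (Polynomial.isRoot_of_mem_roots hr))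
    -- the roots are nodup, all equal to 1, so natDegree = 1
    have hnodup : p.roots.Nodup := Polynomial.nodup_roots hsep
    have hcard1 : p.natDegree = 1 := by
      have hle : p.roots.toFinset ⊆ {1} := by
        intro r hr
        rw [Finset.mem_singleton]
        exact hroots1 r (Multiset.mem_toFinset.1 hr)
      have : p.roots.toFinset.card ≤ 1 := by
        simpa using Finset.card_le_card hle
      rw [Multiset.toFinset_card_of_nodup hnodup, hroots_card] at this
      omega
    have hp1 : p = X + C (p.coeff 0) := hmonic.eq_X_add_C hcard1
    have hroot_mem : (1 : ℂ) ∈ p.roots := by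
      have : p.roots.card = 1 := by rw [hroots_card, hcard1]
      obtain ⟨r, hr⟩ := Multiset.card_eq_one.1 this
      have : r ∈ p.roots := by rw [hr]; exact Multiset.mem_singleton_self r
      have hr1 := hroots1 r this
      rwa [← hr1]
    have hcoeff : p.coeff 0 = -1 := by
      have : p.eval 1 = 0 := Polynomial.isRoot_of_mem_roots hroot_mem
      rw [hp1] at this
      simp at this
      linear_combination this
    have haeval : aeval U p = 0 := minpoly.aeval ℂ U
    rw [hp1, hcoeff] at haeval
    simp only [map_add, aeval_X, map_neg, map_one] at haeval
    have h5 : U + (-1) = 0 := by simpa using haeval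
    rwa [add_neg_eq_zero] at h5
  -- U and W commute (as endomorphisms)
  have hUW : U * W = W * U := by
    have h1 : ((u * w : (V →L[ℂ] V)ˣ) : V →L[ℂ] V)
        = ((w * u : (V →L[ℂ] V)ˣ) : V →L[ℂ] V) := by rw [hcomm]
    rw [Units.val_mul, Units.val_mul] at h1
    have h2 := congrArg (ContinuousLinearMap.toLinearMapRingHom (R₁ := ℂ) (M₁ := V)) h1
    rw [map_mul, map_mul] at h2
    exact h2
  -- W preserves the eigenspace E of U
  set E := Module.End.eigenspace U μ with hE
  have hWE : ∀ v ∈ E, W v ∈ E := by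
    intro v hv
    rw [hE, Module.End.mem_eigenspace_iff] at hv ⊢
    calc U (W v) = (U * W) v := rfl
      _ = (W * U) v := by rw [hUW]
      _ = W (U v) := rfl
      _ = W (μ • v) := by rw [hv]
      _ = μ • W v := map_smul W μ v
  haveI hEnt : Nontrivial E := Submodule.nontrivial_iff_ne_bot.2 hμ
  obtain ⟨β, hβ⟩ := Module.End.exists_eigenvalue (W.restrict hWE)
  obtain ⟨wv, hwv⟩ := hβ.exists_hasEigenvector
  set v : V := (wv : V) with hv
  have hv0 : v ≠ 0 := fun h0 => hwv.2 (Subtype.ext h0)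
  have hWv : W v = β • v := by
    have h1 : (W.restrict hWE) wv = β • wv := hwv.apply_eq_smul
    have h2 := congrArg (Subtype.val) h1
    rwa [LinearMap.restrict_coe_apply] at h2
  have hUv : U v = μ • v := Module.End.mem_eigenspace_iff.1 wv.2
  have hUkv : ∀ k : ℕ, (U ^ k) v = μ ^ k • v := by
    intro k
    induction k with
    | zero => simp
    | succ k ih =>
      calc (U ^ (k + 1)) v = U ((U ^ k) v) := by rw [pow_succ']; rfl
        _ = U (μ ^ k • v) := by rw [ih]
        _ = μ ^ k • U v := map_smul U _ v
        _ = μ ^ k • (μ • v) := by rw [hUv]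
        _ = μ ^ (k + 1) • v := by rw [smul_smul, ← pow_succ]
  have hcoe : ∀ k : ℕ, ((↑(u ^ k * w) : V →L[ℂ] V) : V →ₗ[ℂ] V) = U ^ k * W := by
    intro k
    have h1 : (↑(u ^ k * w) : V →L[ℂ] V) = (↑u : V →L[ℂ] V) ^ k * ↑w := by
      rw [Units.val_mul, Units.val_pow_eq_pow_val]
    have h2 := congrArg (ContinuousLinearMap.toLinearMapRingHom (R₁ := ℂ) (M₁ := V)) h1
    rw [map_mul, map_pow] at h2
    exact h2
  have heig : ∀ k : ℕ, ‖μ ^ k * β - 1‖ < 1 / 2 := by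
    intro k
    apply hspec k
    rw [hcoe k]
    refine Module.End.hasEigenvalue_of_hasEigenvector (x := v) ⟨?_, hv0⟩
    rw [Module.End.mem_eigenspace_iff]
    calc (U ^ k * W) v = (U ^ k) (W v) := rfl
      _ = (U ^ k) (β • v) := by rw [hWv]
      _ = β • (U ^ k) v := map_smul _ _ _
      _ = β • (μ ^ k • v) := by rw [hUkv]
      _ = (μ ^ k * β) • v := by rw [smul_smul, mul_comm]
  have hβ1 : ‖β - 1‖ < 1 / 2 := by simpa using heig 0
  -- μ ^ m = 1
  have hμm : μ ^ m = 1 := by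
    have h1 : (U ^ m) v = v := by rw [hUm]; rfl
    rw [hUkv m] at h1
    have h2 : (μ ^ m - 1) • v = 0 := by rw [sub_smul, one_smul, h1, sub_self]
    rcases smul_eq_zero.1 h2 with h3 | h3
    · exact sub_eq_zero.1 h3
    · exact absurd h3 hv0
  have habs : ‖μ‖ = 1 := by
    apply real_pow_eq_one hm (norm_nonneg μ)
    rw [← norm_pow, hμm, norm_one]
  obtain ⟨k, hk⟩ := exists_pow_re_neg hm hμm hμne
  have habsk : ‖μ ^ k‖ = 1 := by rw [norm_pow, habs, one_pow]
  have hsq : ‖μ ^ k - 1‖ ^ 2 > 2 := by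
    have h1 : ‖μ ^ k - 1‖ ^ 2 = Complex.normSq (μ ^ k - 1) := by
      rw [← Complex.sq_norm]
    have h2 : Complex.normSq (μ ^ k - 1)
        = Complex.normSq (μ ^ k) - 2 * (μ ^ k).re + 1 := by
      simp [Complex.normSq_apply, Complex.sub_re, Complex.sub_im]; ring
    have h3 : Complex.normSq (μ ^ k) = 1 := by
      rw [← Complex.sq_norm]
      have : ‖μ ^ k‖ = 1 := habsk
      rw [this]; norm_num
    rw [h1, h2, h3]
    nlinarith [hk]
  have htri : ‖μ ^ k - 1‖ ≤ ‖μ ^ k * β - 1‖ + ‖β - 1‖ := by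
    have h1 : μ ^ k - 1 = (μ ^ k * β - 1) + (μ ^ k - μ ^ k * β) := by ring
    have h2 : ‖μ ^ k - μ ^ k * β‖ = ‖β - 1‖ := by
      have : μ ^ k - μ ^ k * β = μ ^ k * (1 - β) := by ring
      rw [this, norm_mul, habsk, one_mul, norm_sub_rev]
    calc ‖μ ^ k - 1‖ ≤ ‖μ ^ k * β - 1‖ + ‖μ ^ k - μ ^ k * β‖ := by
          rw [h1]; exact norm_add_le _ _
      _ = ‖μ ^ k * β - 1‖ + ‖β - 1‖ := by rw [h2]
  have hk2 := heig k
  nlinarith [norm_nonneg (μ ^ k - 1), hsq, htri, hβ1, hk2]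

end Aux

/-- For a finite group `G` of linear isometries of a finite-dimensional complex
normed vector space, the subgroup generated by
`M = {x ∈ G : ‖id - x‖ < 1/2}` is an abelian normal subgroup of `G`. -/
theorem closure_near_id_abelian_normal
    (V : Type*) [NormedAddCommGroup V] [NormedSpace ℂ V] [FiniteDimensional ℂ V]
    (G : Subgroup (V →L[ℂ] V)ˣ) [Finite G]
    (hiso : ∀ g ∈ G, ∀ v : V, ‖(g : V →L[ℂ] V) v‖ = ‖v‖)
    (A : Subgroup G)
    (hA : A = Subgroup.closure
      {x : G | ‖(1 : V →L[ℂ] V) - ((x : (V →L[ℂ] V)ˣ) : V →L[ℂ] V)‖ < 1 / 2}) :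
    A.Normal ∧ IsMulCommutative A := by
  subst hA
  set S : Set G := {x : G | ‖(1 : V →L[ℂ] V) - ((x : (V →L[ℂ] V)ˣ) : V →L[ℂ] V)‖ < 1 / 2}
    with hS
  -- members of G have operator norm ≤ 1
  have hop : ∀ g : G, ‖((g : (V →L[ℂ] V)ˣ) : V →L[ℂ] V)‖ ≤ 1 := by
    intro g
    refine ContinuousLinearMap.opNorm_le_bound _ zero_le_one (fun v => ?_)
    rw [hiso _ g.2 v, one_mul]
  -- coercion of products
  have hcoe2 : ∀ a b : G, ((↑(a * b) : (V →L[ℂ] V)ˣ) : V →L[ℂ] V)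
      = ((a : (V →L[ℂ] V)ˣ) : V →L[ℂ] V) * ((b : (V →L[ℂ] V)ˣ) : V →L[ℂ] V) := by
    intro a b; rfl
  have hinv1 : ∀ a : G, ((a : (V →L[ℂ] V)ˣ) : V →L[ℂ] V)
      * ((↑(a⁻¹) : (V →L[ℂ] V)ˣ) : V →L[ℂ] V) = 1 := by
    intro a
    rw [← hcoe2 a a⁻¹, mul_inv_cancel]
    rfl
  -- conjugation invariance of S
  have hconj : ∀ g x : G, x ∈ S → g * x * g⁻¹ ∈ S := by
    intro g x hx
    rw [hS, Set.mem_setOf_eq] at hx ⊢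
    have key_eq : (1 : V →L[ℂ] V) - ((↑(g * x * g⁻¹) : (V →L[ℂ] V)ˣ) : V →L[ℂ] V)
        = ((g : (V →L[ℂ] V)ˣ) : V →L[ℂ] V)
          * ((1 : V →L[ℂ] V) - ((x : (V →L[ℂ] V)ˣ) : V →L[ℂ] V))
          * ((↑(g⁻¹) : (V →L[ℂ] V)ˣ) : V →L[ℂ] V) := by
      rw [hcoe2, hcoe2, mul_sub, sub_mul, mul_one]
      rw [hinv1 g]
    rw [key_eq]
    have h1 := norm_mul_le (((g : (V →L[ℂ] V)ˣ) : V →L[ℂ] V)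
        * ((1 : V →L[ℂ] V) - ((x : (V →L[ℂ] V)ˣ) : V →L[ℂ] V)))
        ((↑(g⁻¹) : (V →L[ℂ] V)ˣ) : V →L[ℂ] V)
    have h2 := norm_mul_le ((g : (V →L[ℂ] V)ˣ) : V →L[ℂ] V)
        ((1 : V →L[ℂ] V) - ((x : (V →L[ℂ] V)ˣ) : V →L[ℂ] V))
    have h3 := hop g
    have h4 := hop g⁻¹
    have h5 := norm_nonneg ((1 : V →L[ℂ] V) - ((x : (V →L[ℂ] V)ˣ) : V →L[ℂ] V))
    have h6 := norm_nonneg ((g : (V →L[ℂ] V)ˣ) : V →L[ℂ] V)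
    have h7 := norm_nonneg ((↑(g⁻¹) : (V →L[ℂ] V)ˣ) : V →L[ℂ] V)
    have h8 := norm_nonneg (((g : (V →L[ℂ] V)ˣ) : V →L[ℂ] V)
        * ((1 : V →L[ℂ] V) - ((x : (V →L[ℂ] V)ˣ) : V →L[ℂ] V)))
    nlinarith
  -- normality
  have hnormal : (Subgroup.closure S).Normal := by
    constructor
    intro a ha g
    induction ha using Subgroup.closure_induction with
    | mem x hx => exact Subgroup.subset_closure (hconj g x hx)
    | one => simpa using (Subgroup.closure S).one_mem
    | mul x y hx hy ihx ihy =>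
      have h : g * (x * y) * g⁻¹ = (g * x * g⁻¹) * (g * y * g⁻¹) := by group
      rw [h]; exact mul_mem ihx ihy
    | inv x hx ihx =>
      have h : g * x⁻¹ * g⁻¹ = (g * x * g⁻¹)⁻¹ := by group
      rw [h]; exact inv_mem ihx
  -- commutator norm estimate
  have hnorm : ∀ a b : G,
      ‖(1 : V →L[ℂ] V) - ((↑(a * b * a⁻¹ * b⁻¹) : (V →L[ℂ] V)ˣ) : V →L[ℂ] V)‖
      ≤ 2 * ‖(1 : V →L[ℂ] V) - ((a : (V →L[ℂ] V)ˣ) : V →L[ℂ] V)‖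
        * ‖(1 : V →L[ℂ] V) - ((b : (V →L[ℂ] V)ˣ) : V →L[ℂ] V)‖ := by
    intro a b
    set A1 : V →L[ℂ] V := ((a : (V →L[ℂ] V)ˣ) : V →L[ℂ] V) with hA1
    set B1 : V →L[ℂ] V := ((b : (V →L[ℂ] V)ˣ) : V →L[ℂ] V) with hB1
    set A2 : V →L[ℂ] V := ((↑(a⁻¹) : (V →L[ℂ] V)ˣ) : V →L[ℂ] V) with hA2
    set B2 : V →L[ℂ] V := ((↑(b⁻¹) : (V →L[ℂ] V)ˣ) : V →L[ℂ] V) with hB2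
    have hAA : A1 * A2 = 1 := hinv1 a
    have hBB : B1 * B2 = 1 := hinv1 b
    have hid : (1 : V →L[ℂ] V) - ((↑(a * b * a⁻¹ * b⁻¹) : (V →L[ℂ] V)ˣ) : V →L[ℂ] V)
        = ((1 - B1) * (1 - A1) - (1 - A1) * (1 - B1)) * A2 * B2 := by
      have hc : ((↑(a * b * a⁻¹ * b⁻¹) : (V →L[ℂ] V)ˣ) : V →L[ℂ] V)
          = A1 * B1 * A2 * B2 := by
        rw [hcoe2, hcoe2, hcoe2]
      rw [hc]
      have e1 : ((1 - B1) * (1 - A1) - (1 - A1) * (1 - B1)) * A2 * B2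
          = B1 * (A1 * A2) * B2 - A1 * B1 * A2 * B2 := by noncomm_ring
      rw [e1, hAA, mul_one, hBB]
    rw [hid]
    have h1 := norm_mul_le (((1 - B1) * (1 - A1) - (1 - A1) * (1 - B1)) * A2) B2
    have h2 := norm_mul_le ((1 - B1) * (1 - A1) - (1 - A1) * (1 - B1)) A2
    have h3 := norm_sub_le ((1 - B1) * (1 - A1)) ((1 - A1) * (1 - B1))
    have h4 := norm_mul_le (1 - B1) (1 - A1)
    have h5 := norm_mul_le (1 - A1) (1 - B1)
    have h6 := hop a⁻¹
    have h7 := hop b⁻¹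
    have n1 := norm_nonneg (1 - A1)
    have n2 := norm_nonneg (1 - B1)
    have n3 := norm_nonneg A2
    have n4 := norm_nonneg B2
    have n5 := norm_nonneg ((1 - B1) * (1 - A1) - (1 - A1) * (1 - B1))
    have n6 := norm_nonneg (((1 - B1) * (1 - A1) - (1 - A1) * (1 - B1)) * A2)
    have hr : ‖(1 : V →L[ℂ] V) - A1‖ = ‖(1 : V →L[ℂ] V) - B1‖ * 0 + ‖(1 : V →L[ℂ] V) - A1‖ := by ring
    nlinarith
  -- all elements of S pairwise commute
  have hpair : ∀ x ∈ S, ∀ y ∈ S, x * y = y * x := by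
    by_contra hcon
    push_neg at hcon
    obtain ⟨x0, hx0, y0, hy0, hxy0⟩ := hcon
    set N : G → ℝ := fun z => ‖(1 : V →L[ℂ] V) - ((z : (V →L[ℂ] V)ˣ) : V →L[ℂ] V)‖ with hN
    set Uset : Set G := {y : G | y ∈ S ∧ ∃ x ∈ S, x * y ≠ y * x} with hUset
    have hune : Uset.Nonempty := ⟨y0, hy0, x0, hx0, hxy0⟩
    obtain ⟨y, hymem, hmin⟩ := Set.exists_min_image Uset N (Set.toFinite _) hune
    obtain ⟨hyS, x, hxS, hxy⟩ := hymem
    have hNypos : 0 < N y := by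
      rcases lt_or_eq_of_le (norm_nonneg ((1 : V →L[ℂ] V)
          - ((y : (V →L[ℂ] V)ˣ) : V →L[ℂ] V))) with h | h
      · exact h
      · exfalso
        have h1 : (1 : V →L[ℂ] V) - ((y : (V →L[ℂ] V)ˣ) : V →L[ℂ] V) = 0 := by
          rw [← norm_eq_zero]; exact h.symm
        have h2 : ((y : (V →L[ℂ] V)ˣ) : V →L[ℂ] V) = 1 := by
          have := sub_eq_zero.1 h1; exact this.symm
        have h3 : y = (1 : G) := by
          apply Subtype.ext; apply Units.ext; exact h2
        apply hxy
        rw [h3, mul_one, one_mul]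
    set c : G := x * y * x⁻¹ * y⁻¹ with hc
    have hcnorm : N c ≤ 2 * N x * N y := hnorm x y
    have hNx : N x < 1 / 2 := hxS
    have hclty : N c < N y := by
      have : 2 * N x * N y < 2 * (1 / 2) * N y := by
        apply mul_lt_mul_of_pos_right _ hNypos
        exact mul_lt_mul_of_pos_left hNx (by norm_num)
      simp only [hN] at *
      nlinarith
    have hcS : c ∈ S := by
      rw [hS, Set.mem_setOf_eq]
      have := hyS
      rw [hS, Set.mem_setOf_eq] at this
      calc ‖(1 : V →L[ℂ] V) - ((c : (V →L[ℂ] V)ˣ) : V →L[ℂ] V)‖ = N c := rfl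
        _ < N y := hclty
        _ < 1 / 2 := this
    have hccomm : ∀ z ∈ S, z * c = c * z := by
      intro z hz
      by_contra hzc
      have hcU : c ∈ Uset := ⟨hcS, z, hz, hzc⟩
      have := hmin c hcU
      linarith
    have hxc : x * c = c * x := hccomm x hxS
    have hyc : y * c = c * y := hccomm y hyS
    have hcne : c ≠ 1 := by
      intro h
      apply hxy
      have h1 : x * y * x⁻¹ = y := by rwa [hc, mul_inv_eq_one] at h
      have h2 := congrArg (· * x) h1
      simpa [inv_mul_cancel_right] using h2
    have hxyinv : x * y * x⁻¹ = c * y := by rw [hc]; group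
    have hconjk : ∀ k : ℕ, x ^ k * y * (x ^ k)⁻¹ = c ^ k * y := by
      intro k
      induction k with
      | zero => simp
      | succ k ih =>
        have hxck : x * c ^ k = c ^ k * x := Commute.pow_right hxc k
        calc x ^ (k + 1) * y * (x ^ (k + 1))⁻¹
            = x * (x ^ k * y * (x ^ k)⁻¹) * x⁻¹ := by group
          _ = x * (c ^ k * y) * x⁻¹ := by rw [ih]
          _ = (x * c ^ k) * y * x⁻¹ := by group
          _ = (c ^ k * x) * y * x⁻¹ := by rw [hxck]
          _ = c ^ k * (x * y * x⁻¹) := by group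
          _ = c ^ k * (c * y) := by rw [hxyinv]
          _ = c ^ (k + 1) * y := by rw [← mul_assoc, ← pow_succ]
    obtain ⟨nn, hyn⟩ : ∃ nn : ℕ, 0 < nn ∧ y ^ nn = 1 :=
      ⟨orderOf y, orderOf_pos y, pow_orderOf_eq_one y⟩
    obtain ⟨mm, hcm⟩ : ∃ mm : ℕ, 0 < mm ∧ c ^ mm = 1 :=
      ⟨orderOf c, orderOf_pos c, pow_orderOf_eq_one c⟩
    have hckey : ((c : (V →L[ℂ] V)ˣ)) = 1 := by
      apply key_lemma ((c : (V →L[ℂ] V)ˣ)) ((y : (V →L[ℂ] V)ˣ)) hyn.1 hcm.1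
      · have := congrArg (fun z : G => (z : (V →L[ℂ] V)ˣ)) hyn.2
        simpa using this
      · have := congrArg (fun z : G => (z : (V →L[ℂ] V)ˣ)) hcm.2
        simpa using this
      · have h1 : c * y = y * c := hyc.symm
        have := congrArg (fun z : G => (z : (V →L[ℂ] V)ˣ)) h1
        simpa using this
      · intro k μ hk
        have he1 : ((c : (V →L[ℂ] V)ˣ)) ^ k * (y : (V →L[ℂ] V)ˣ)
            = ((↑(x ^ k) : (V →L[ℂ] V)ˣ)) * (y : (V →L[ℂ] V)ˣ)
              * ((↑(x ^ k) : (V →L[ℂ] V)ˣ))⁻¹ := by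
          have h1 := congrArg (fun z : G => (z : (V →L[ℂ] V)ˣ)) (hconjk k)
          simp only [Subgroup.coe_mul, Subgroup.coe_pow, InvMemClass.coe_inv] at h1
          rw [← h1]
          simp [Subgroup.coe_pow]
        rw [he1] at hk
        have hk2 : Module.End.HasEigenvalue
            ((((y : (V →L[ℂ] V)ˣ) : V →L[ℂ] V)) : V →ₗ[ℂ] V) μ := by
          apply hasEigenvalue_conj ((↑(x ^ k) : (V →L[ℂ] V)ˣ))
          convert hk using 2
          rw [Units.val_mul, Units.val_mul]
        have hle := eig_dist_le hk2
        have hyS2 : ‖(1 : V →L[ℂ] V) - ((y : (V →L[ℂ] V)ˣ) : V →L[ℂ] V)‖ < 1 / 2 := hyS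
        linarith
    apply hcne
    apply Subtype.ext
    rw [hckey]
    rfl
  -- commutativity of the closure
  have hcent : Subgroup.closure S ≤ Subgroup.centralizer S :=
    (Subgroup.closure_le _).2 (fun s hs => Subgroup.mem_centralizer_iff.2
      (fun t ht => hpair t ht s hs))
  have hcc : ∀ a ∈ Subgroup.closure S, ∀ b ∈ Subgroup.closure S, a * b = b * a := by
    intro a ha b hb
    have hb' : ∀ s ∈ S, s * b = b * s := Subgroup.mem_centralizer_iff.1 (hcent hb)
    have hmem : a ∈ Subgroup.centralizer {b} := by
      refine (Subgroup.closure_le _).2 ?_ ha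
      intro s hs
      rw [SetLike.mem_coe, Subgroup.mem_centralizer_iff]
      intro t ht
      rw [Set.mem_singleton_iff] at ht
      subst ht
      exact (hb' s hs).symm
    have := Subgroup.mem_centralizer_iff.1 hmem b (Set.mem_singleton b)
    exact this.symm
  exact ⟨hnormal, ⟨⟨fun a b => Subtype.ext (hcc a a.2 b b.2)⟩⟩⟩
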